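/- arXiv:2512.04923 — 2 statements merged into one kernel-verified Lean document; each statement's English description precedes it below -/
import Mathlib

section
/- Let q ∈ [0,1] and k ≥ 2 an integer with p = 0. If k·q ≤ 1, then x = 0 is the unique solution in [0,1] of x = q - (1-x)^k·q; if k·q > 1, this equation has exactly two solutions in [0,1], one of which is 0 and the other lies in (0,1]. -/
open Set

private lemma gderiv (q : ℝ) (k : ℕ) (x : ℝ) :
    HasDerivAt (fun x : ℝ => x - q + (1 - x) ^ k * q)
      (1 - (k : ℝ) * (1 - x) ^ (k - 1) * q) x := by
  have h1 : HasDerivAt (fun x : ℝ => (1 - x)) (-1) x := by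
    simpa using (hasDerivAt_id x).const_sub 1
  have h3 := ((hasDerivAt_id x).sub_const q).add ((h1.pow k).mul_const q)
  refine h3.congr_deriv ?_
  ring

private lemma gderiv2 (q : ℝ) (k : ℕ) (hk : 2 ≤ k) (x : ℝ) :
    HasDerivAt (fun x : ℝ => 1 - (k : ℝ) * (1 - x) ^ (k - 1) * q)
      ((k : ℝ) * ((k - 1 : ℕ) : ℝ) * (1 - x) ^ (k - 2) * q) x := by
  have h1 : HasDerivAt (fun x : ℝ => (1 - x)) (-1) x := by
    simpa using (hasDerivAt_id x).const_sub 1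
  have h3 := (((h1.pow (k-1)).const_mul (k:ℝ)).mul_const q).const_sub 1
  refine h3.congr_deriv ?_
  have h : k - 1 - 1 = k - 2 := by omega
  rw [h]; ring

theorem stmt2 (q : ℝ) (k : ℕ) (hq : q ∈ Set.Icc (0:ℝ) 1) (hk : 2 ≤ k) :
    ((k : ℝ) * q ≤ 1 →
      ∀ x ∈ Set.Icc (0:ℝ) 1, (x = q - (1 - x) ^ k * q ↔ x = 0)) ∧
    (1 < (k : ℝ) * q →
      (0 : ℝ) = q - (1 - (0:ℝ)) ^ k * q ∧
      ∃ y ∈ Set.Ioc (0:ℝ) 1, y = q - (1 - y) ^ k * q ∧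
        ∀ x ∈ Set.Icc (0:ℝ) 1, x = q - (1 - x) ^ k * q → x = 0 ∨ x = y) := by
  obtain ⟨hq0, hq1⟩ := hq
  have hK2 : (2:ℝ) ≤ (k:ℝ) := by exact_mod_cast hk
  have hKpos : (0:ℝ) < (k:ℝ) := by linarith
  set g : ℝ → ℝ := fun x => x - q + (1 - x) ^ k * q with hgdef
  have gcont : Continuous g := by
    apply Continuous.add
    · exact (continuous_id.sub continuous_const)
    · exact (((continuous_const.sub continuous_id).pow k).mul continuous_const)
  have hdg : deriv g = fun x => 1 - (k:ℝ) * (1-x)^(k-1) * q :=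
    funext fun x => (gderiv q k x).deriv
  have hg0 : g 0 = 0 := by simp [hgdef]
  constructor
  · intro hkq x hx
    constructor
    · intro heq
      by_contra hx0
      have hxpos : 0 < x := lt_of_le_of_ne hx.1 (Ne.symm hx0)
      rcases eq_or_lt_of_le hq0 with hq0' | hqpos
      · apply hx0
        rw [← hq0'] at heq
        simpa using heq
      · have hmono : StrictMonoOn g (Icc 0 1) := by
          apply strictMonoOn_of_deriv_pos (convex_Icc 0 1) gcont.continuousOn
          intro z hz
          rw [interior_Icc] at hz
          rw [hdg]
          have h1 : (1 - z) ^ (k-1) < 1 :=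
            pow_lt_one₀ (by linarith [hz.2]) (by linarith [hz.1]) (by omega)
          have h2 : (k:ℝ) * (1-z)^(k-1) * q < (k:ℝ) * 1 * q :=
            mul_lt_mul_of_pos_right (mul_lt_mul_of_pos_left h1 hKpos) hqpos
          dsimp only
          nlinarith
        have hlt := hmono (left_mem_Icc.2 zero_le_one) hx hxpos
        have hgx : g x = 0 := by simp only [hgdef]; linarith
        rw [hg0, hgx] at hlt
        exact absurd hlt (lt_irrefl 0)
    · intro h; subst h; simp
  · intro hkq
    have hqpos : 0 < q := by nlinarith
    have hkqpos : 0 < (k:ℝ)*q := by linarith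
    refine ⟨by simp, ?_⟩
    set δ : ℝ := 1 - 1/((k:ℝ)*q) with hδdef
    have hδpos : 0 < δ := by
      have := (div_lt_one hkqpos).2 hkq
      simp only [hδdef]; linarith
    have hδ1 : δ < 1 := by
      have : 0 < 1/((k:ℝ)*q) := by positivity
      simp only [hδdef]; linarith
    set ε : ℝ := δ/(2*(k:ℝ)) with hεdef
    have hεpos : 0 < ε := by positivity
    have hε1 : ε < 1 := by
      rw [hεdef, div_lt_one (by linarith)]
      nlinarith
    have hcast : ((k-1:ℕ):ℝ) = (k:ℝ) - 1 := by
      rw [Nat.cast_sub (by omega)]; norm_num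
    clear_value δ ε
    -- g is negative at ε
    have hanti : StrictAntiOn g (Icc 0 ε) := by
      apply strictAntiOn_of_deriv_neg (convex_Icc 0 ε) gcont.continuousOn
      intro z hz
      rw [interior_Icc] at hz
      obtain ⟨hz0, hzε⟩ := hz
      rw [hdg]
      dsimp only
      have hb : 1 - ((k-1:ℕ):ℝ)*z ≤ (1-z)^(k-1) := by
        have h := one_add_mul_le_pow (a := -z) (by nlinarith) (k-1)
        have e1 : (1 : ℝ) + (-z) = 1 - z := by ring
        have e2 : (1 : ℝ) + ((k-1:ℕ):ℝ) * (-z) = 1 - ((k-1:ℕ):ℝ)*z := by ring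
        rw [e1, e2] at h
        exact h
      rw [hcast] at hb
      have hz2 : ((k:ℝ)-1)*z < δ/2 := by
        have h1 : ((k:ℝ)-1)*z ≤ (k:ℝ)*z := by nlinarith
        have h2 : (k:ℝ)*z < (k:ℝ)*ε := by nlinarith
        have h3 : (k:ℝ)*ε = δ/2 := by
          rw [hεdef]; field_simp
        linarith
      have hlow : 1/((k:ℝ)*q) < (1-z)^(k-1) := by
        have : 1 - δ = 1/((k:ℝ)*q) := by simp only [hδdef]; ring
        linarith
      have : 1 < (k:ℝ)*q * (1-z)^(k-1) := by
        have := (div_lt_iff₀ hkqpos).1 (by rw [div_eq_mul_inv, one_mul] at hlow ⊢; exact hlow)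
        linarith [this]
      nlinarith
    have hgε : g ε < 0 := by
      have := hanti (left_mem_Icc.2 hεpos.le) (right_mem_Icc.2 hεpos.le) hεpos
      rw [hg0] at this
      exact this
    have hg1 : 0 ≤ g 1 := by
      have : g 1 = 1 - q := by
        simp only [hgdef]
        rw [sub_self, zero_pow (by omega)]
        ring
      rw [this]; linarith
    obtain ⟨y, hymem, hgy⟩ := intermediate_value_Icc (le_of_lt hε1)
      (gcont.continuousOn) (show (0:ℝ) ∈ Icc (g ε) (g 1) from ⟨hgε.le, hg1⟩)
    have hypos : 0 < y := lt_of_lt_of_le hεpos hymem.1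
    have hy1 : y ≤ 1 := hymem.2
    have hyeq : y = q - (1 - y) ^ k * q := by
      simp only [hgdef] at hgy; linarith
    -- strict convexity for uniqueness
    have hconv : StrictConvexOn ℝ (Icc (0:ℝ) 1) g := by
      apply strictConvexOn_of_deriv2_pos (convex_Icc 0 1) gcont.continuousOn
      intro z hz
      rw [interior_Icc] at hz
      have h2 : deriv^[2] g z = (k:ℝ) * ((k-1:ℕ):ℝ) * (1-z)^(k-2) * q := by
        simp only [Function.iterate_succ, Function.iterate_zero, Function.comp_apply, id_eq]
        rw [hdg]
        exact (gderiv2 q k hk z).deriv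
      rw [h2, hcast]
      have hp : (0:ℝ) < (1-z)^(k-2) := pow_pos (by linarith [hz.2]) _
      have : (0:ℝ) < (k:ℝ) - 1 := by linarith
      positivity
    refine ⟨y, ⟨hypos, hy1⟩, hyeq, ?_⟩
    intro x hx heq
    by_contra hcon
    push_neg at hcon
    obtain ⟨hx0, hxy⟩ := hcon
    have hxpos : 0 < x := lt_of_le_of_ne hx.1 (Ne.symm hx0)
    have hgx : g x = 0 := by simp only [hgdef]; linarith
    set b := min x y with hbdef
    set c := max x y with hcdef
    have hbc : b < c := min_lt_max.2 hxy
    have hbpos : 0 < b := lt_min hxpos hypos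
    have hc1 : c ≤ 1 := max_le hx.2 hy1
    have hcpos : 0 < c := lt_trans hbpos hbc
    have hgb : g b = 0 := by
      rcases min_choice x y with h | h <;> rw [hbdef, h] <;> [exact hgx; exact hgy]
    have hgc : g c = 0 := by
      rcases max_choice x y with h | h <;> rw [hcdef, h] <;> [exact hgx; exact hgy]
    have key := hconv.2 (left_mem_Icc.2 zero_le_one)
      (show c ∈ Icc (0:ℝ) 1 from ⟨hcpos.le, hc1⟩) (ne_of_lt hcpos)
      (show 0 < (c-b)/c from div_pos (by linarith) hcpos)
      (show 0 < b/c from div_pos hbpos hcpos)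
      (by field_simp; ring)
    rw [smul_eq_mul, smul_eq_mul, smul_eq_mul] at key
    have harg : (c-b)/c * 0 + b/c * c = b := by field_simp; ring
    rw [harg, hg0, hgb, hgc] at key
    simp at key
end

section
/- Let q ∈ [1/2, 1), ε ∈ (0, 2 - 1/q), and define p_max = 2 - 1/q. For any x with 0 < x ≤ p_max - ε, we have (1 - ε/8)·q·(1-(1-x)²) ≥ x(1 + ε/4). Consequently, the sequence p_0 = p > 0, p_{i+1} = (1-ε/8)q(1-(1-p_i)²) satisfies p_{i+1} ≥ p_i(1+ε/4) as long as p_i ≤ p_max - ε, and hence reaches p_max - ε within O((1/ε)log(1/p)) iterations. -/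
theorem stmt12 (q ε p : ℝ) (seq : ℕ → ℝ)
    (hq : q ∈ Set.Ico (1/2 : ℝ) 1) (hε : ε ∈ Set.Ioo (0:ℝ) (2 - 1/q))
    (hp : 0 < p) (hp' : p < 2 - 1/q)
    (h0 : seq 0 = p) (hrec : ∀ i, seq (i + 1) = (1 - ε/8) * q * (1 - (1 - seq i) ^ 2)) :
    (∀ x : ℝ, 0 < x → x ≤ (2 - 1/q) - ε →
      x * (1 + ε/4) ≤ (1 - ε/8) * q * (1 - (1 - x) ^ 2)) ∧
    (∀ i, 0 < seq i → seq i ≤ (2 - 1/q) - ε → seq i * (1 + ε/4) ≤ seq (i + 1)) ∧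
    (∃ n : ℕ, (n : ℝ) ≤ 8 / ε * Real.log (1 / p) + 1 ∧ (2 - 1/q) - ε ≤ seq n) := by
  obtain ⟨hq1, hq2⟩ := hq
  obtain ⟨hε1, hε2⟩ := hε
  have hq0 : 0 < q := by linarith
  have hinvq : 1 < 1/q := by
    rw [lt_div_iff₀ hq0]; linarith
  have hε3 : ε < 1 := by linarith
  have hp1 : p < 1 := by linarith
  -- Part 1
  have part1 : ∀ x : ℝ, 0 < x → x ≤ (2 - 1/q) - ε →
      x * (1 + ε/4) ≤ (1 - ε/8) * q * (1 - (1 - x) ^ 2) := by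
    intro x hx hx'
    have h2x : 1/q + ε ≤ 2 - x := by linarith
    have hA : q * (1/q + ε) ≤ q * (2 - x) :=
      mul_le_mul_of_nonneg_left h2x hq0.le
    have hB : q * (1/q + ε) = 1 + q * ε := by field_simp
    have hC : 1 + ε/2 ≤ q * (2 - x) := by nlinarith
    have hD : 1 + ε/4 ≤ (1 - ε/8) * (q * (2 - x)) := by nlinarith
    have hE : x * (1 + ε/4) ≤ x * ((1 - ε/8) * (q * (2 - x))) :=
      mul_le_mul_of_nonneg_left hD hx.le
    nlinarith [hE]
  refine ⟨part1, ?_, ?_⟩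
  · intro i hpos hle
    rw [hrec i]
    exact part1 _ hpos hle
  · set L := Real.log (1/p) with hL
    have hL0 : 0 < L := Real.log_pos (by rw [lt_div_iff₀ hp]; linarith)
    set N := ⌈(6/ε) * L⌉₊ with hN
    have hNge : (6/ε) * L ≤ (N : ℝ) := Nat.le_ceil _
    have hNle : (N : ℝ) ≤ 8/ε * L + 1 := by
      have h1 : (N : ℝ) < (6/ε) * L + 1 :=
        Nat.ceil_lt_add_one (by positivity)
      have h2 : (6/ε) * L ≤ 8/ε * L := by
        apply mul_le_mul_of_nonneg_right _ hL0.le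
        gcongr <;> linarith
      linarith
    by_cases hex : ∃ n ≤ N, (2 - 1/q) - ε ≤ seq n
    · obtain ⟨n, hnN, hsn⟩ := hex
      exact ⟨n, le_trans (by exact_mod_cast Nat.cast_le.2 hnN) hNle, hsn⟩
    · exfalso
      push_neg at hex
      have key : ∀ i ≤ N, 0 < seq i ∧ p * (1 + ε/4) ^ i ≤ seq i := by
        intro i hi
        induction i with
        | zero => simp [h0, hp]
        | succ i ih =>
          obtain ⟨hpos, hge⟩ := ih (Nat.le_of_succ_le hi)
          have hlt := hex i (Nat.le_of_succ_le hi)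
          have step : seq i * (1 + ε/4) ≤ seq (i+1) := by
            rw [hrec i]; exact part1 _ hpos hlt.le
          constructor
          · have : 0 < seq i * (1 + ε/4) := by positivity
            linarith
          · calc p * (1 + ε/4) ^ (i+1) = (p * (1 + ε/4) ^ i) * (1 + ε/4) := by ring
              _ ≤ seq i * (1 + ε/4) := mul_le_mul_of_nonneg_right hge (by linarith)
              _ ≤ seq (i+1) := step
      obtain ⟨_, hgeN⟩ := key N le_rfl
      have hltN := hex N le_rfl
      -- show p * (1+ε/4)^N ≥ 1
      have h14 : (0:ℝ) < 1 + ε/4 := by linarith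
      have hloglb : ε/6 ≤ Real.log (1 + ε/4) := by
        have hinv : Real.log ((1 + ε/4)⁻¹) ≤ (1 + ε/4)⁻¹ - 1 :=
          Real.log_le_sub_one_of_pos (by positivity)
        rw [Real.log_inv] at hinv
        have hinvle : (1 + ε/4)⁻¹ ≤ 1 - ε/6 := by
          rw [inv_le_comm₀ (by positivity) (by nlinarith)]
          rw [inv_eq_one_div, div_le_iff₀ (by nlinarith)]
          nlinarith
        linarith
      have hlogpow : L ≤ Real.log ((1 + ε/4) ^ N) := by
        rw [Real.log_pow]
        calc L = (6/ε * L) * (ε/6) := by field_simp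
          _ ≤ (N : ℝ) * (ε/6) := mul_le_mul_of_nonneg_right hNge (by positivity)
          _ ≤ (N : ℝ) * Real.log (1 + ε/4) :=
            mul_le_mul_of_nonneg_left hloglb (Nat.cast_nonneg N)
      have hpow : 1/p ≤ (1 + ε/4) ^ N := by
        have := Real.exp_le_exp.mpr hlogpow
        rwa [Real.exp_log (by positivity), Real.exp_log (by positivity)] at this
      have : 1 ≤ p * (1 + ε/4) ^ N := by
        rw [div_le_iff₀ hp] at hpow
        linarith [hpow]
      have hlt1 : (2 - 1/q) - ε < 1 := by linarith
      linarith
end
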